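/- arXiv:1308.2368 — 3 statements merged into one kernel-verified Lean document; each statement's English description precedes it below -/
import Mathlib

section
/- For any graph G and any non-negative integer n, box(M_2(G^{f^n})) ≥ box(G^{f^n}) + ⌈n/2⌉, where G^{f^n} is the graph obtained from G by adding n successive focal (universal) vertices. -/
open SimpleGraph

/-- `G` has a representation by axis-parallel boxes in `ℝ^k`: distinct vertices are
adjacent iff their boxes intersect. -/
def HasBoxRep {V : Type*} (G : SimpleGraph V) (k : ℕ) : Prop :=
  ∃ lo hi : V → Fin k → ℝ,
    ∀ u v : V, u ≠ v →
      (G.Adj u v ↔ ∀ i, max (lo u i) (lo v i) ≤ min (hi u i) (hi v i))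

/-- The boxicity of a graph: the least `k` such that `G` has a box representation
in `ℝ^k` (0 for complete graphs). -/
noncomputable def boxicity {V : Type*} (G : SimpleGraph V) : ℕ :=
  sInf {k | HasBoxRep G k}

/-- An interval graph: an intersection graph of closed intervals on the real line. -/
def IsIntervalGraph {V : Type*} (G : SimpleGraph V) : Prop := HasBoxRep G 1

/-- A cointerval graph: the complement is an interval graph. -/
def Cointerval {V : Type*} (G : SimpleGraph V) : Prop := IsIntervalGraph Gᶜ

/-- The generalized Mycielski graph `M_r(G)`: vertex `none` is the apex `z`,
`some (v, i)` is the copy `v_{i+1}` of `v` in level `i`.  Level `0` induces a copy of `G`,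
consecutive levels are joined by `u_{i-1}v_i, v_{i-1}u_i` for `uv ∈ E(G)`, and `z`
is joined to all vertices of the top level `r-1`. -/
def genMycielski {V : Type*} (G : SimpleGraph V) (r : ℕ) :
    SimpleGraph (Option (V × Fin r)) :=
  SimpleGraph.fromRel (fun a b =>
    match a, b with
    | some (u, i), some (v, j) =>
        (i = j ∧ (i : ℕ) = 0 ∧ G.Adj u v) ∨ ((j : ℕ) = (i : ℕ) + 1 ∧ G.Adj u v)
    | some (_, i), none => (i : ℕ) = r - 1
    | none, _ => False)

/-- A focal (universal) vertex: adjacent to all other vertices. -/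
def IsFocal {V : Type*} (G : SimpleGraph V) (v : V) : Prop :=
  ∀ w, w ≠ v → G.Adj v w

/-- `G` with `n` additional universal vertices, i.e. the `n`-th focalization `G^{fⁿ}`. -/
def addUniversal {V : Type*} (G : SimpleGraph V) (n : ℕ) :
    SimpleGraph (V ⊕ Fin n) :=
  SimpleGraph.fromRel (fun a b =>
    match a, b with
    | Sum.inl u, Sum.inl v => G.Adj u v
    | _, _ => True)

/-- The edge clique cover number: the minimum number of cliques covering all edges. -/
noncomputable def edgeCliqueCoverNumber {V : Type*} (G : SimpleGraph V) : ℕ :=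
  sInf {k | ∃ f : Fin k → Set V, (∀ i, G.IsClique (f i)) ∧
    ∀ u v, G.Adj u v → ∃ i, u ∈ f i ∧ v ∈ f i}

/-- Disjoint union of two graphs. -/
def disjUnionGraph {α β : Type*} (G : SimpleGraph α) (H : SimpleGraph β) :
    SimpleGraph (α ⊕ β) :=
  SimpleGraph.fromRel (fun a b =>
    match a, b with
    | Sum.inl u, Sum.inl v => G.Adj u v
    | Sum.inr u, Sum.inr v => H.Adj u v
    | _, _ => False)

/-- The complete multipartite graph with parts `V i`. -/
def completeMultipartite {ι : Type*} (V : ι → Type*) : SimpleGraph (Σ i, V i) where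
  Adj a b := a.1 ≠ b.1
  symm := ⟨fun _ _ h => Ne.symm h⟩
  loopless := ⟨fun _ h => h rfl⟩

private lemma myc00 {W : Type*} (H : SimpleGraph W) (u v : W) :
    (genMycielski H 2).Adj (some (u, 0)) (some (v, 0)) ↔ H.Adj u v := by
  rw [genMycielski, SimpleGraph.fromRel_adj]
  constructor
  · rintro ⟨hne, h | h⟩ <;> simp_all
    exact h.symm
  · intro h
    exact ⟨by simp [h.ne], Or.inl (Or.inl ⟨rfl, rfl, h⟩)⟩

private lemma myc01 {W : Type*} (H : SimpleGraph W) (u v : W) :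
    (genMycielski H 2).Adj (some (u, 0)) (some (v, 1)) ↔ H.Adj u v := by
  rw [genMycielski, SimpleGraph.fromRel_adj]
  constructor
  · rintro ⟨hne, h | h⟩ <;> simp_all
  · intro h
    exact ⟨by simp, Or.inl (Or.inr ⟨rfl, h⟩)⟩

private lemma mycz {W : Type*} (H : SimpleGraph W) (v : W) :
    (genMycielski H 2).Adj none (some (v, 1)) := by
  rw [genMycielski, SimpleGraph.fromRel_adj]
  exact ⟨by simp, Or.inr rfl⟩

private lemma addUniv_adj_inr {V : Type*} (G : SimpleGraph V) (n : ℕ) (t : Fin n) (x : V ⊕ Fin n)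
    (hx : x ≠ Sum.inr t) : (addUniversal G n).Adj (Sum.inr t) x := by
  rw [addUniversal, SimpleGraph.fromRel_adj]
  refine ⟨hx.symm, Or.inl ?_⟩
  cases x <;> trivial

private lemma hasBoxRep_of_fintype {V : Type*} [Fintype V] (G : SimpleGraph V) :
    HasBoxRep G (Fintype.card (V × V)) := by
  classical
  set q := (Fintype.equivFin (V × V)).symm with hq
  refine ⟨fun v i => if ¬ G.Adj (q i).1 (q i).2 ∧ (q i).1 ≠ (q i).2 ∧ v = (q i).2 then 1 else 0,
          fun v i => if ¬ G.Adj (q i).1 (q i).2 ∧ (q i).1 ≠ (q i).2 ∧ v = (q i).1 then 0 else 1,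
          ?_⟩
  intro u v huv
  constructor
  · intro hadj i
    have h1 : u = (q i).1 → v = (q i).2 → G.Adj (q i).1 (q i).2 :=
      fun hu hv => hu ▸ hv ▸ hadj
    have h2 : u = (q i).2 → v = (q i).1 → G.Adj (q i).1 (q i).2 :=
      fun hu hv => hu ▸ hv ▸ hadj.symm
    simp only [sup_le_iff, le_inf_iff]
    split_ifs with c1 c2 c3 c4 <;> norm_num <;> simp_all
  · intro hall
    by_contra hadj
    have h := hall (q.symm (u, v))
    simp only [Equiv.apply_symm_apply] at h
    simp only [hadj, huv, not_false_iff, true_and, Ne, and_true, if_true, if_false,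
      not_true, not_false_eq_true] at h
    have : (1:ℝ) ≤ 0 := le_trans (le_sup_right) (h.trans inf_le_left)
    linarith


/-- `box(M₂(G^{fⁿ})) ≥ box(G^{fⁿ}) + ⌈n/2⌉`. -/
theorem boxicity_mycielski_focalization {V : Type*} [Fintype V]
    (G : SimpleGraph V) (n : ℕ) :
    boxicity (addUniversal G n) + (n + 1) / 2 ≤
      boxicity (genMycielski (addUniversal G n) 2) := by
  classical
  set H := addUniversal G n with hHdef
  set M := genMycielski H 2 with hMdef
  set d := boxicity M with hd
  have hmem : HasBoxRep M d := Nat.sInf_mem (s := {k | HasBoxRep M k}) ⟨_, hasBoxRep_of_fintype M⟩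
  obtain ⟨lo, hi, hrep⟩ := hmem
  set X : Fin n → Option ((V ⊕ Fin n) × Fin 2) := fun t => some (Sum.inr t, 0) with hX
  set Y : Fin n → Option ((V ⊕ Fin n) × Fin 2) := fun t => some (Sum.inr t, 1) with hY
  have hUniv : ∀ (t : Fin n) (x : V ⊕ Fin n), x ≠ Sum.inr t → H.Adj (Sum.inr t) x :=
    fun t x hx => addUniv_adj_inr G n t x hx
  set inter : Option ((V ⊕ Fin n) × Fin 2) → Option ((V ⊕ Fin n) × Fin 2) → Fin d → Prop :=
    fun a b j => max (lo a j) (lo b j) ≤ min (hi a j) (hi b j) with hinter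
  have hadj_inter : ∀ a b, M.Adj a b → ∀ j, inter a b j :=
    fun a b h j => ((hrep a b h.ne).mp h) j
  have hsep : ∀ a b, a ≠ b → ¬ M.Adj a b → ∃ j, ¬ inter a b j := by
    intro a b hab hnadj
    by_contra hc
    push_neg at hc
    exact hnadj ((hrep a b hab).mpr hc)
  have hXY : ∀ t : Fin n, ∃ j, ¬ inter (X t) (Y t) j := by
    intro t
    refine hsep _ _ (by simp [hX, hY]) ?_
    rw [hX, hY, hMdef]
    intro h
    exact H.irrefl ((myc01 H _ _).mp h)
  -- basic interval consequences
  have ha : ∀ a b j, inter a b j → lo a j ≤ hi b j :=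
    fun a b j h => le_trans (le_max_left _ _) (le_trans h (min_le_right _ _))
  have hb : ∀ a b j, inter a b j → lo b j ≤ hi a j :=
    fun a b j h => le_trans (le_max_right _ _) (le_trans h (min_le_left _ _))
  have ha' : ∀ a b j, inter a b j → lo a j ≤ hi a j :=
    fun a b j h => le_trans (le_max_left _ _) (le_trans h (min_le_left _ _))
  have hb' : ∀ a b j, inter a b j → lo b j ≤ hi b j :=
    fun a b j h => le_trans (le_max_right _ _) (le_trans h (min_le_right _ _))
  -- adjacency between special vertices
  have hXXadj : ∀ t s : Fin n, t ≠ s → M.Adj (X t) (X s) := by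
    intro t s hts
    rw [hX, hMdef]
    exact (myc00 H _ _).mpr (hUniv t (Sum.inr s) (by simp [hts.symm]))
  have hXYadj : ∀ t s : Fin n, t ≠ s → M.Adj (X t) (Y s) := by
    intro t s hts
    rw [hX, hY, hMdef]
    exact (myc01 H _ _).mpr (hUniv t (Sum.inr s) (by simp [hts.symm]))
  have hZYadj : ∀ t : Fin n, M.Adj none (Y t) := by
    intro t; rw [hY, hMdef]; exact mycz H _
  -- dichotomy for a separated pair, given nonemptiness
  have dich : ∀ (t : Fin n) (j : Fin d), lo (X t) j ≤ hi (X t) j →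
      ¬ inter (X t) (Y t) j →
      hi (X t) j < lo (Y t) j ∨ hi (Y t) j < lo (X t) j := by
    intro t j hx hsep'
    have hy : lo (Y t) j ≤ hi (Y t) j := hb' _ _ j (hadj_inter _ _ (hZYadj t) j)
    by_contra hcon
    push_neg at hcon
    exact hsep' (by
      rw [hinter]
      simp only [max_le_iff, le_min_iff]
      exact ⟨⟨hx, hcon.1⟩, ⟨hcon.2, hy⟩⟩)
  -- no three indices separated at the same coordinate
  have key : ∀ (j : Fin d) (t₁ t₂ t₃ : Fin n), t₁ ≠ t₂ → t₁ ≠ t₃ → t₂ ≠ t₃ →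
      ¬ inter (X t₁) (Y t₁) j → ¬ inter (X t₂) (Y t₂) j →
      ¬ inter (X t₃) (Y t₃) j → False := by
    intro j t₁ t₂ t₃ h12 h13 h23 s1 s2 s3
    have ne1 : lo (X t₁) j ≤ hi (X t₁) j := ha' _ _ j (hadj_inter _ _ (hXXadj t₁ t₂ h12) j)
    have ne2 : lo (X t₂) j ≤ hi (X t₂) j := ha' _ _ j (hadj_inter _ _ (hXXadj t₂ t₁ h12.symm) j)
    have ne3 : lo (X t₃) j ≤ hi (X t₃) j := ha' _ _ j (hadj_inter _ _ (hXXadj t₃ t₁ h13.symm) j)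
    have cross : ∀ t s : Fin n, t ≠ s →
        lo (Y s) j ≤ hi (X t) j ∧ lo (X t) j ≤ hi (Y s) j := by
      intro t s hts
      have h := hadj_inter _ _ (hXYadj t s hts) j
      exact ⟨hb _ _ j h, ha _ _ j h⟩
    have noLL : ∀ t s : Fin n, t ≠ s → hi (X t) j < lo (Y t) j →
        hi (X s) j < lo (Y s) j → False := by
      intro t s hts ht hs
      have c1 := (cross t s hts).1
      have c2 := (cross s t hts.symm).1
      linarith
    have noRR : ∀ t s : Fin n, t ≠ s → hi (Y t) j < lo (X t) j →
        hi (Y s) j < lo (X s) j → False := by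
      intro t s hts ht hs
      have c1 := (cross t s hts).2
      have c2 := (cross s t hts.symm).2
      linarith
    rcases dich t₁ j ne1 s1 with h1 | h1 <;> rcases dich t₂ j ne2 s2 with h2 | h2 <;>
      rcases dich t₃ j ne3 s3 with h3 | h3
    · exact noLL t₁ t₂ h12 h1 h2
    · exact noLL t₁ t₂ h12 h1 h2
    · exact noLL t₁ t₃ h13 h1 h3
    · exact noRR t₂ t₃ h23 h2 h3
    · exact noLL t₂ t₃ h23 h2 h3
    · exact noRR t₁ t₃ h13 h1 h3
    · exact noRR t₁ t₂ h12 h1 h2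
    · exact noRR t₁ t₂ h12 h1 h2
  -- choose separating coordinates
  set c : Fin n → Fin d := fun t => (hXY t).choose with hcdef
  have hc : ∀ t, ¬ inter (X t) (Y t) (c t) := fun t => (hXY t).choose_spec
  set S : Finset (Fin d) := Finset.univ.image c with hS
  have hn2 : n ≤ 2 * S.card := by
    have hfib : ∀ b ∈ Finset.univ.image c,
        ((Finset.univ : Finset (Fin n)).filter fun t => c t = b).card ≤ 2 := by
      intro b _
      by_contra hcon
      push_neg at hcon
      rw [Finset.two_lt_card_iff] at hcon
      obtain ⟨t₁, t₂, t₃, m1, m2, m3, h12, h13, h23⟩ := hcon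
      simp only [Finset.mem_filter] at m1 m2 m3
      exact key b t₁ t₂ t₃ h12 h13 h23 (m1.2 ▸ hc t₁) (m2.2 ▸ hc t₂) (m3.2 ▸ hc t₃)
    have := Finset.card_le_mul_card_image (Finset.univ : Finset (Fin n)) 2 hfib
    simpa [hS] using this
  -- coordinates in S do not separate any non-adjacent pair in level 0
  have hnotsep : ∀ (u v : V ⊕ Fin n), ¬ H.Adj u v → u ≠ v → ∀ j ∈ S,
      inter (some (u, 0)) (some (v, 0)) j := by
    intro u v hnadj huv j hj
    rw [hS] at hj
    simp only [Finset.mem_image, Finset.mem_univ, true_and] at hj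
    obtain ⟨t, ht⟩ := hj
    have hsepXY : ¬ inter (X t) (Y t) j := ht ▸ hc t
    have hut : u ≠ Sum.inr t := by
      rintro rfl
      exact hnadj (hUniv t v (Ne.symm huv))
    have hvt : v ≠ Sum.inr t := by
      rintro rfl
      exact hnadj ((hUniv t u huv).symm)
    have huX : M.Adj (some (u, 0)) (X t) := by
      rw [hX, hMdef]; exact (myc00 H _ _).mpr (hUniv t u hut).symm
    have huY : M.Adj (some (u, 0)) (Y t) := by
      rw [hY, hMdef]; exact (myc01 H _ _).mpr (hUniv t u hut).symm
    have hvX : M.Adj (some (v, 0)) (X t) := by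
      rw [hX, hMdef]; exact (myc00 H _ _).mpr (hUniv t v hvt).symm
    have hvY : M.Adj (some (v, 0)) (Y t) := by
      rw [hY, hMdef]; exact (myc01 H _ _).mpr (hUniv t v hvt).symm
    have iuX := hadj_inter _ _ huX j
    have iuY := hadj_inter _ _ huY j
    have ivX := hadj_inter _ _ hvX j
    have ivY := hadj_inter _ _ hvY j
    have hXne : lo (X t) j ≤ hi (X t) j := hb' _ _ j iuX
    rcases dich t j hXne hsepXY with hL | hR
    · rw [hinter]
      simp only [max_le_iff, le_min_iff]
      have u1 : lo (some (u, (0:Fin 2))) j ≤ hi (X t) j := ha _ _ j iuX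
      have u2 : lo (Y t) j ≤ hi (some (u, (0:Fin 2))) j := hb _ _ j iuY
      have v1 : lo (some (v, (0:Fin 2))) j ≤ hi (X t) j := ha _ _ j ivX
      have v2 : lo (Y t) j ≤ hi (some (v, (0:Fin 2))) j := hb _ _ j ivY
      constructor <;> constructor <;> linarith
    · rw [hinter]
      simp only [max_le_iff, le_min_iff]
      have u1 : lo (X t) j ≤ hi (some (u, (0:Fin 2))) j := hb _ _ j iuX
      have u2 : lo (some (u, (0:Fin 2))) j ≤ hi (Y t) j := ha _ _ j iuY
      have v1 : lo (X t) j ≤ hi (some (v, (0:Fin 2))) j := hb _ _ j ivX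
      have v2 : lo (some (v, (0:Fin 2))) j ≤ hi (Y t) j := ha _ _ j ivY
      constructor <;> constructor <;> linarith
  -- a box representation of H in the remaining coordinates
  set T : Finset (Fin d) := Sᶜ with hT
  have hbox : HasBoxRep H T.card := by
    set e := T.equivFin with he
    refine ⟨fun v i => lo (some (v, 0)) (e.symm i : Fin d),
            fun v i => hi (some (v, 0)) (e.symm i : Fin d), ?_⟩
    intro u v huv
    constructor
    · intro h i
      have : M.Adj (some (u, 0)) (some (v, 0)) := by
        rw [hMdef]; exact (myc00 H u v).mpr h
      exact hadj_inter _ _ this (e.symm i : Fin d)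
    · intro hall
      by_contra hnadj
      have hne' : (some (u, (0:Fin 2)) : Option ((V ⊕ Fin n) × Fin 2)) ≠ some (v, 0) := by
        simp [huv]
      have hnadj' : ¬ M.Adj (some (u, 0)) (some (v, 0)) := by
        rw [hMdef]
        intro h
        exact hnadj ((myc00 H u v).mp h)
      obtain ⟨j, hj⟩ := hsep _ _ hne' hnadj'
      have hjT : j ∈ T := by
        rw [hT, Finset.mem_compl]
        intro hjS
        exact hj (hnotsep u v hnadj huv j hjS)
      have h2 := hall (e ⟨j, hjT⟩)
      simp only [Equiv.symm_apply_apply] at h2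
      exact hj h2
  have h1 : boxicity H ≤ T.card := Nat.sInf_le hbox
  have h2 : T.card = d - S.card := by
    rw [hT, Finset.card_compl, Fintype.card_fin]
  have h3 : S.card ≤ d := by
    have := Finset.card_le_univ S
    simpa using this
  omega
end

section
/- Let G be a graph with exactly l focal (universal) vertices and r ≥ 2. Then box(M_r(G)) ≥ box(G) + ⌈l/2⌉. In particular, if G has at least one focal vertex then box(M_r(G)) > box(G). -/
open SimpleGraph

private lemma quad {a b c d : ℝ} (h : max a b ≤ min c d) :
    a ≤ c ∧ a ≤ d ∧ b ≤ c ∧ b ≤ d := by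
  simp only [max_le_iff, le_min_iff] at h
  exact ⟨h.1.1, h.2.1, h.1.2, h.2.2⟩

private lemma exists_hasBoxRep {W : Type*} [Fintype W] (M : SimpleGraph W) :
    ∃ k, HasBoxRep M k := by
  classical
  refine ⟨Fintype.card {p : W × W // p.1 ≠ p.2 ∧ ¬ M.Adj p.1 p.2}, ?_⟩
  set e := (Fintype.equivFin {p : W × W // p.1 ≠ p.2 ∧ ¬ M.Adj p.1 p.2}).symm with he
  refine ⟨fun w i => if w = (e i).1.2 then 1 else 0,
          fun w i => if w = (e i).1.1 then 0 else 1, ?_⟩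
  intro u v huv
  constructor
  · intro hadj i
    have h1 : ¬(u = (e i).1.1 ∧ v = (e i).1.2) := by
      rintro ⟨h1, h2⟩; exact (e i).2.2 (h1 ▸ h2 ▸ hadj)
    have h2 : ¬(v = (e i).1.1 ∧ u = (e i).1.2) := by
      rintro ⟨h1, h2⟩; exact (e i).2.2 (h1 ▸ h2 ▸ hadj.symm)
    have h3 := (e i).2.1
    dsimp only
    split_ifs with ha hb hc hd <;> norm_num <;> simp_all <;> norm_num
  · intro h
    by_contra hadj
    have hi := h (e.symm ⟨(u, v), huv, hadj⟩)
    simp only [he, Equiv.apply_symm_apply] at hi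
    simp [huv, Ne.symm huv] at hi
    norm_num at hi

/-- if `G` has exactly `l` focal vertices and `r ≥ 2`, then
`box(M_r(G)) ≥ box(G) + ⌈l/2⌉`; if `l ≥ 1` then `box(M_r(G)) > box(G)`. -/
theorem boxicity_genMycielski_ge_add_focal {V : Type*} [Fintype V]
    (G : SimpleGraph V) (r l : ℕ) (hr : 2 ≤ r)
    (hl : {v | IsFocal G v}.ncard = l) :
    boxicity G + (l + 1) / 2 ≤ boxicity (genMycielski G r) ∧
    (1 ≤ l → boxicity G < boxicity (genMycielski G r)) := by
  classical
  have key : ∀ d, HasBoxRep (genMycielski G r) d → boxicity G + (l + 1) / 2 ≤ d := by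
    intro d hd
    obtain ⟨lo, hi, H⟩ := hd
    set v0 : V → Option (V × Fin r) := fun u => some (u, ⟨0, by omega⟩) with hv0
    set v1 : V → Option (V × Fin r) := fun u => some (u, ⟨1, by omega⟩) with hv1
    have hne01 : ∀ u w : V, v0 u ≠ v1 w := by
      intro u w
      simp [hv0, hv1]
    have Hadj : ∀ {a b}, (genMycielski G r).Adj a b →
        ∀ i, max (lo a i) (lo b i) ≤ min (hi a i) (hi b i) :=
      fun {a b} hab i => ((H a b hab.ne).mp hab) i
    have adjG : ∀ {u v : V}, G.Adj u v → (genMycielski G r).Adj (v0 u) (v0 v) := by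
      intro u v huv
      rw [genMycielski, SimpleGraph.fromRel_adj]
      exact ⟨by simp [hv0, huv.ne], Or.inl (Or.inl ⟨rfl, rfl, huv⟩)⟩
    have adjG' : ∀ {u v : V}, (genMycielski G r).Adj (v0 u) (v0 v) → G.Adj u v := by
      intro u v h
      rw [genMycielski, SimpleGraph.fromRel_adj] at h
      obtain ⟨-, h | h⟩ := h <;>
        rcases h with ⟨-, -, h⟩ | ⟨h, h'⟩
      · exact h
      · simp at h
      · exact h.symm
      · simp at h
    have adjX : ∀ {u v : V}, G.Adj u v → (genMycielski G r).Adj (v0 u) (v1 v) := by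
      intro u v huv
      rw [genMycielski, SimpleGraph.fromRel_adj]
      exact ⟨hne01 u v, Or.inl (Or.inr ⟨rfl, huv⟩)⟩
    have nself : ∀ u : V, ¬ (genMycielski G r).Adj (v0 u) (v1 u) := by
      intro u h
      rw [genMycielski, SimpleGraph.fromRel_adj] at h
      obtain ⟨-, h | h⟩ := h <;>
        rcases h with ⟨-, -, h⟩ | ⟨-, h⟩ <;> exact G.loopless.irrefl u h
    -- Claim E : a dimension separating a level-0 non-edge cannot separate (w0, w1) for focal w
    have claimE : ∀ (i : Fin d) (w x y : V), IsFocal G w → x ≠ y → ¬ G.Adj x y →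
        ¬ (max (lo (v0 x) i) (lo (v0 y) i) ≤ min (hi (v0 x) i) (hi (v0 y) i)) →
        max (lo (v0 w) i) (lo (v1 w) i) ≤ min (hi (v0 w) i) (hi (v1 w) i) := by
      intro i w x y hw hxy hnxy hsep
      have hxw : x ≠ w := by rintro rfl; exact hnxy (hw y (Ne.symm hxy))
      have hyw : y ≠ w := by rintro rfl; exact hnxy ((hw x hxy).symm)
      have awx : G.Adj w x := hw x hxw
      have awy : G.Adj w y := hw y hyw
      obtain ⟨a1, a2, a3, a4⟩ := quad (Hadj (adjG awx) i)
      obtain ⟨b1, b2, b3, b4⟩ := quad (Hadj (adjG awy) i)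
      obtain ⟨c1, c2, c3, c4⟩ := quad (Hadj (adjX awx.symm) i)
      obtain ⟨e1, e2, e3, e4⟩ := quad (Hadj (adjX awy.symm) i)
      have hcase : hi (v0 x) i < lo (v0 y) i ∨ hi (v0 y) i < lo (v0 x) i := by
        by_contra hc
        push_neg at hc
        exact hsep (max_le (le_min a4 hc.2) (le_min hc.1 b4))
      rcases hcase with h | h <;>
        refine max_le (le_min ?_ ?_) (le_min ?_ ?_) <;> linarith
    -- focal vertices and their separating dimensions
    set Fs : Finset V := Finset.univ.filter (fun v => IsFocal G v) with hFs
    have hFsl : Fs.card = l := by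
      rw [← hl, Set.ncard_eq_toFinset_card']
      congr 1
      ext v
      simp [hFs]
    have focal : ∀ s : {v // v ∈ Fs}, IsFocal G s.1 :=
      fun s => (Finset.mem_filter.mp s.2).2
    have exdim : ∀ s : {v // v ∈ Fs}, ∃ i : Fin d,
        ¬ (max (lo (v0 s.1) i) (lo (v1 s.1) i) ≤ min (hi (v0 s.1) i) (hi (v1 s.1) i)) := by
      intro s
      by_contra hc
      push_neg at hc
      exact nself s.1 ((H _ _ (hne01 s.1 s.1)).mpr hc)
    choose kf kfspec using exdim
    set sd : {v // v ∈ Fs} → Bool :=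
      fun s => decide (hi (v0 s.1) (kf s) < lo (v1 s.1) (kf s)) with hsd
    have inj : ∀ s t : {v // v ∈ Fs}, kf s = kf t → sd s = sd t → s = t := by
      intro s t hk hs
      by_contra hst
      have hne : s.1 ≠ t.1 := fun h => hst (Subtype.ext h)
      have huv : G.Adj s.1 t.1 := (focal s) t.1 (Ne.symm hne)
      obtain ⟨a1, a2, a3, a4⟩ := quad (Hadj (adjG huv) (kf s))
      obtain ⟨b1, b2, b3, b4⟩ := quad (Hadj (adjX huv) (kf s))
      obtain ⟨c1, c2, c3, c4⟩ := quad (Hadj (adjX huv.symm) (kf s))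
      have ns := kfspec s
      have nt := kfspec t
      rw [← hk] at nt
      have hPQ : (hi (v0 s.1) (kf s) < lo (v1 s.1) (kf s)) ↔
          (hi (v0 t.1) (kf s) < lo (v1 t.1) (kf s)) := by
        have := hs
        rw [hsd] at this
        simp only [← hk] at this
        exact decide_eq_decide.mp this
      have ds : hi (v0 s.1) (kf s) < lo (v1 s.1) (kf s) ∨
          hi (v1 s.1) (kf s) < lo (v0 s.1) (kf s) := by
        by_contra hc
        push_neg at hc
        exact ns (max_le (le_min a1 hc.2) (le_min hc.1 c4))
      have dt : hi (v0 t.1) (kf s) < lo (v1 t.1) (kf s) ∨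
          hi (v1 t.1) (kf s) < lo (v0 t.1) (kf s) := by
        by_contra hc
        push_neg at hc
        exact nt (max_le (le_min c1 hc.2) (le_min hc.1 b4))
      rcases ds with h1 | h1
      · have hQ := hPQ.mp h1
        linarith
      · have hnQ : ¬ (hi (v0 t.1) (kf s) < lo (v1 t.1) (kf s)) := by
          intro hQ
          have hP := hPQ.mpr hQ
          linarith
        rcases dt with h2 | h2
        · exact hnQ h2
        · linarith
    -- counting : l ≤ 2 * K.card
    set K : Finset (Fin d) := Fs.attach.image kf with hK
    have hcard2 : l ≤ 2 * K.card := by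
      have h1 : Fs.attach.card ≤ (K ×ˢ (Finset.univ : Finset Bool)).card := by
        apply Finset.card_le_card_of_injOn (fun s => (kf s, sd s))
        · intro s _
          rw [Finset.mem_coe, Finset.mem_product]
          exact ⟨by rw [hK]; exact Finset.mem_image_of_mem kf (Finset.mem_attach _ s),
            Finset.mem_univ _⟩
        · intro s _ t _ hst
          exact inj s t (congrArg Prod.fst hst) (congrArg Prod.snd hst)
      rw [Finset.card_product, Finset.card_attach, hFsl] at h1
      simp only [Finset.card_univ, Fintype.card_bool] at h1
      omega
    -- restriction to dimensions outside K gives a box representation of G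
    set C : Finset (Fin d) := Kᶜ with hC
    have hCcard : Fintype.card {i // i ∈ C} = d - K.card := by
      rw [Fintype.card_coe, hC, Finset.card_compl, Fintype.card_fin]
    set eC : {i // i ∈ C} ≃ Fin (d - K.card) :=
      (Fintype.equivFin _).trans (finCongr hCcard) with heC
    have hrepG : HasBoxRep G (d - K.card) := by
      refine ⟨fun v j => lo (v0 v) (eC.symm j).1, fun v j => hi (v0 v) (eC.symm j).1, ?_⟩
      intro u v huv
      constructor
      · intro hadj j
        exact Hadj (adjG hadj) _
      · intro hmeets
        by_contra hnadj
        have hnall : ¬ ∀ i, max (lo (v0 u) i) (lo (v0 v) i) ≤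
            min (hi (v0 u) i) (hi (v0 v) i) := by
          intro hall
          exact hnadj (adjG' ((H (v0 u) (v0 v) (by simp [hv0, huv])).mpr hall))
        push_neg at hnall
        obtain ⟨i, hisep⟩ := hnall
        have hisep' : ¬ (max (lo (v0 u) i) (lo (v0 v) i) ≤
            min (hi (v0 u) i) (hi (v0 v) i)) := not_le.mpr hisep
        have hiC : i ∈ C := by
          rw [hC, Finset.mem_compl]
          intro hiK
          rw [hK] at hiK
          obtain ⟨s, -, rfl⟩ := Finset.mem_image.mp hiK
          exact kfspec s (claimE (kf s) s.1 u v (focal s) huv hnadj hisep')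
        have hj := hmeets (eC ⟨i, hiC⟩)
        simp only [Equiv.symm_apply_apply] at hj
        exact hisep' hj
    have hboxG : boxicity G ≤ d - K.card := Nat.sInf_le hrepG
    have hKd : K.card ≤ d := by
      have := Finset.card_le_univ K
      simpa using this
    omega
  have hne : {k | HasBoxRep (genMycielski G r) k}.Nonempty := exists_hasBoxRep _
  have hmem : HasBoxRep (genMycielski G r) (boxicity (genMycielski G r)) := Nat.sInf_mem hne
  have main := key _ hmem
  exact ⟨main, fun h1 => by omega⟩
end

section
/- For the complete graph K_n with n even, say n = 2k, the Mycielski graph M_2(K_{2k}) satisfies box(M_2(K_{2k})) > k; that is, the complement of M_2(K_{2k}) cannot be covered by k cointerval spanning subgraphs. -/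
open SimpleGraph

-- padding lemma
lemma hasBoxRep_mono {V : Type*} (G : SimpleGraph V) {m k : ℕ} (hmk : m ≤ k)
    (h : HasBoxRep G m) : HasBoxRep G k := by
  obtain ⟨lo, hi, hP⟩ := h
  refine ⟨fun v i => if h : (i : ℕ) < m then lo v ⟨i, h⟩ else 0,
          fun v i => if h : (i : ℕ) < m then hi v ⟨i, h⟩ else 0, ?_⟩
  intro u v huv
  rw [hP u v huv]
  constructor
  · intro h i
    by_cases hi' : (i : ℕ) < m
    · simpa [hi'] using h ⟨i, hi'⟩
    · simp [hi']
  · intro h j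
    have := h ⟨j, lt_of_lt_of_le j.2 hmk⟩
    simpa [j.2] using this


-- existence of a box representation in enough dimensions
lemma hasBoxRep_exists {V : Type*} [Fintype V] [DecidableEq V] (G : SimpleGraph V) :
    ∃ N, HasBoxRep G N := by
  classical
  refine ⟨Fintype.card (V × V), ?_⟩
  set e := (Fintype.equivFin (V × V)).symm with he
  refine ⟨fun v i => if ¬ G.Adj (e i).1 (e i).2 ∧ (e i).1 ≠ (e i).2 then
      (if v = (e i).2 then 2 else 0) else 0,
    fun v i => if ¬ G.Adj (e i).1 (e i).2 ∧ (e i).1 ≠ (e i).2 then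
      (if v = (e i).1 then 0 else 2) else 2, ?_⟩
  intro u v huv
  constructor
  · intro hadj i
    by_cases hcond : ¬ G.Adj (e i).1 (e i).2 ∧ (e i).1 ≠ (e i).2
    · have h1 : ¬ (u = (e i).1 ∧ v = (e i).2) := by
        rintro ⟨rfl, rfl⟩; exact hcond.1 hadj
      have h2 : ¬ (u = (e i).2 ∧ v = (e i).1) := by
        rintro ⟨rfl, rfl⟩; exact hcond.1 hadj.symm
      simp only [hcond, if_true, and_self, if_pos, ne_eq, not_false_eq_true]
      by_cases hu1 : u = (e i).1 <;> by_cases hu2 : u = (e i).2 <;>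
        by_cases hv1 : v = (e i).1 <;> by_cases hv2 : v = (e i).2 <;>
        first
          | (exfalso; first
              | exact hcond.2 (hu1 ▸ hu2 ▸ rfl)
              | exact hcond.2 (hv1 ▸ hv2 ▸ rfl)
              | exact huv (hu1.trans hv1.symm)
              | exact huv (hu2.trans hv2.symm)
              | exact h1 ⟨hu1, hv2⟩
              | exact h2 ⟨hu2, hv1⟩)
          | (simp [hu1, hu2, hv1, hv2, hcond.2, Ne.symm hcond.2])
    · simp [hcond]
  · intro h
    by_contra hnadj
    have := h (e.symm (u, v))
    simp only [Equiv.apply_symm_apply] at this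
    simp [hnadj, huv, Ne.symm huv] at this
    norm_num at this

lemma key_no_boxrep (k : ℕ) (hk : 1 ≤ k) :
    ¬ HasBoxRep (genMycielski (completeGraph (Fin (2 * k))) 2) k := by
  classical
  set G := genMycielski (completeGraph (Fin (2 * k))) 2 with hG
  rintro ⟨lo, hi, hP⟩
  -- adjacency facts
  have adj00 : ∀ u v : Fin (2*k), u ≠ v → G.Adj (some (u,0)) (some (v,0)) := by
    intro u v h; simp [hG, genMycielski, completeGraph, h]
  have adj01 : ∀ u v : Fin (2*k), u ≠ v → G.Adj (some (u,0)) (some (v,1)) := by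
    intro u v h; simp [hG, genMycielski, completeGraph, h]
  have adjz1 : ∀ v : Fin (2*k), G.Adj none (some (v,1)) := by
    intro v; simp [hG, genMycielski]
  have nadjvv : ∀ v : Fin (2*k), ¬ G.Adj (some (v,0)) (some (v,1)) := by
    intro v; simp [hG, genMycielski]
  have nadjz0 : ∀ v : Fin (2*k), ¬ G.Adj none (some (v,0)) := by
    intro v; simp [hG, genMycielski]
  -- from adjacency: intervals meet in every coordinate
  have meets : ∀ {x y : Option (Fin (2*k) × Fin 2)}, G.Adj x y → ∀ c,
      lo x c ≤ hi y c ∧ lo y c ≤ hi x c := by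
    intro x y hxy c
    have h := (hP x y hxy.ne).mp hxy c
    rw [max_le_iff, le_min_iff, le_min_iff] at h
    exact ⟨h.1.2, h.2.1⟩
  -- all intervals nonempty
  have hFin : ∀ u : Fin (2*k), ∃ u' : Fin (2*k), u' ≠ u := by
    intro u
    have : 1 < Fintype.card (Fin (2*k)) := by simp; omega
    exact Fintype.exists_ne_of_one_lt_card this u
  have hne : ∀ x : Option (Fin (2*k) × Fin 2), ∀ c, lo x c ≤ hi x c := by
    rintro (_ | ⟨u, i⟩) c
    · have h0 : (0:ℕ) < 2 * k := by omega
      have h := (hP _ _ (adjz1 ⟨0, h0⟩).ne).mp (adjz1 ⟨0, h0⟩) c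
      rw [max_le_iff, le_min_iff, le_min_iff] at h
      exact h.1.1
    · obtain ⟨u', hu'⟩ := hFin u
      fin_cases i
      · have hadj := adj00 u' u hu'
        have h := (hP _ _ hadj.ne).mp hadj c
        rw [max_le_iff, le_min_iff, le_min_iff] at h
        exact h.2.2
      · have hadj := adjz1 u
        have h := (hP _ _ hadj.ne).mp hadj c
        rw [max_le_iff, le_min_iff, le_min_iff] at h
        exact h.2.2
  -- separation for non-adjacent pairs
  have sep : ∀ {x y : Option (Fin (2*k) × Fin 2)}, x ≠ y → ¬ G.Adj x y →
      ∃ c, hi x c < lo y c ∨ hi y c < lo x c := by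
    intro x y hxy hnadj
    have h := (hP x y hxy).not.mp hnadj
    push_neg at h
    obtain ⟨c, hc⟩ := h
    refine ⟨c, ?_⟩
    rcases min_lt_iff.mp hc with h | h <;> rcases lt_max_iff.mp h with h' | h'
    · exact absurd h' (not_lt.mpr (hne x c))
    · exact Or.inl h'
    · exact Or.inr h'
    · exact absurd h' (not_lt.mpr (hne y c))
  -- each vertex has a separating coordinate for (v,0)-(v,1)
  have hD : ∀ v : Fin (2*k), ∃ c,
      hi (some (v,0)) c < lo (some (v,1)) c ∨ hi (some (v,1)) c < lo (some (v,0)) c := by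
    intro v
    exact sep (by simp) (nadjvv v)
  choose c0 hc0 using hD
  -- uniqueness of right / left types at a given coordinate
  have uniqR : ∀ u v : Fin (2*k), ∀ c, hi (some (u,0)) c < lo (some (u,1)) c →
      hi (some (v,0)) c < lo (some (v,1)) c → u = v := by
    intro u v c hu hv
    by_contra huv
    have h1 := meets (adj01 v u (Ne.symm huv)) c
    have h2 := meets (adj01 u v huv) c
    linarith [h1.2, h2.2]
  have uniqL : ∀ u v : Fin (2*k), ∀ c, hi (some (u,1)) c < lo (some (u,0)) c →
      hi (some (v,1)) c < lo (some (v,0)) c → u = v := by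
    intro u v c hu hv
    by_contra huv
    have h1 := meets (adj01 v u (Ne.symm huv)) c
    have h2 := meets (adj01 u v huv) c
    linarith [h1.1, h2.1]
  -- the classifying map
  set g : Fin (2*k) → Fin k × Bool := fun v =>
    (c0 v, if hi (some (v,0)) (c0 v) < lo (some (v,1)) (c0 v) then true else false)
    with hgdef
  have hginj : Function.Injective g := by
    intro u v huv'
    rw [hgdef] at huv'
    simp only [Prod.mk.injEq] at huv'
    obtain ⟨hcc, hbb⟩ := huv'
    by_cases hR : hi (some (u,0)) (c0 u) < lo (some (u,1)) (c0 u)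
    · have hR' : hi (some (v,0)) (c0 v) < lo (some (v,1)) (c0 v) := by
        by_contra hnn
        rw [if_pos hR, if_neg hnn] at hbb
        simp at hbb
      exact uniqR u v (c0 u) hR (hcc ▸ hR')
    · have hL : hi (some (u,1)) (c0 u) < lo (some (u,0)) (c0 u) := (hc0 u).resolve_left hR
      have hR' : ¬ hi (some (v,0)) (c0 v) < lo (some (v,1)) (c0 v) := by
        intro hnn
        rw [if_neg hR, if_pos hnn] at hbb
        exact Bool.false_ne_true hbb
      have hL' : hi (some (v,1)) (c0 v) < lo (some (v,0)) (c0 v) := (hc0 v).resolve_left hR'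
      exact uniqL u v (c0 u) hL (hcc ▸ hL')
  have hgsurj : Function.Surjective g := by
    have hb : Function.Bijective g := (Fintype.bijective_iff_injective_and_card g).mpr
      ⟨hginj, by simp [Fintype.card_prod]; ring⟩
    exact hb.2
  -- pick a vertex and a coordinate separating z from (v0, 0)
  have h0 : (0:ℕ) < 2 * k := by omega
  set v0 : Fin (2*k) := ⟨0, h0⟩ with hv0
  obtain ⟨c, hsep⟩ := sep (show (none : Option (Fin (2*k) × Fin 2)) ≠ some (v0, 0) by simp)
    (nadjz0 v0)
  rcases hsep with hzl | hzr
  · -- z left of (v0,0)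
    obtain ⟨r, hr⟩ := hgsurj (c, true)
    rw [hgdef] at hr
    simp only [Prod.mk.injEq] at hr
    obtain ⟨hcr, hbr⟩ := hr
    have hRr : hi (some (r,0)) (c0 r) < lo (some (r,1)) (c0 r) := by
      by_contra hnn
      rw [if_neg hnn] at hbr
      exact Bool.false_ne_true hbr
    rw [hcr] at hRr
    have hz1 := meets (adjz1 r) c
    by_cases hrv : r = v0
    · subst hrv
      linarith [hz1.2, hRr, hne (some (v0, (0:Fin 2))) c, hzl]
    · have hm := meets (adj00 r v0 hrv) c
      linarith [hz1.2, hRr, hm.2, hzl]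
  · -- z right of (v0,0)
    obtain ⟨l, hl⟩ := hgsurj (c, false)
    rw [hgdef] at hl
    simp only [Prod.mk.injEq] at hl
    obtain ⟨hcl, hbl⟩ := hl
    have hnR : ¬ hi (some (l,0)) (c0 l) < lo (some (l,1)) (c0 l) := by
      intro hnn
      rw [if_pos hnn] at hbl
      simp at hbl
    have hLl : hi (some (l,1)) (c0 l) < lo (some (l,0)) (c0 l) := (hc0 l).resolve_left hnR
    rw [hcl] at hLl
    have hz1 := meets (adjz1 l) c
    by_cases hlv : l = v0
    · subst hlv
      linarith [hz1.1, hLl, hne (some (v0, (0:Fin 2))) c, hzr]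
    · have hm := meets (adj00 l v0 hlv) c
      linarith [hz1.1, hLl, hm.1, hzr]

/-- `box(M₂(K_{2k})) > k`; equivalently, the complement of `M₂(K_{2k})`
cannot be covered by `k` cointerval spanning subgraphs. -/
theorem boxicity_mycielski_complete_even (k : ℕ) (hk : 1 ≤ k) :
    k < boxicity (genMycielski (completeGraph (Fin (2 * k))) 2) ∧
    ¬ ∃ f : Fin k → SimpleGraph (Option (Fin (2 * k) × Fin 2)),
        (∀ i, f i ≤ (genMycielski (completeGraph (Fin (2 * k))) 2)ᶜ) ∧
        (∀ i, Cointerval (f i)) ∧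
        (∀ u v, (genMycielski (completeGraph (Fin (2 * k))) 2)ᶜ.Adj u v →
          ∃ i, (f i).Adj u v) := by
  classical
  set G := genMycielski (completeGraph (Fin (2 * k))) 2 with hG
  have key := key_no_boxrep k hk
  rw [← hG] at key
  constructor
  · obtain ⟨N, hN⟩ := hasBoxRep_exists G
    have hnon : {m | HasBoxRep G m}.Nonempty := ⟨N, hN⟩
    by_contra hle
    push_neg at hle
    have hmem : HasBoxRep G (sInf {m | HasBoxRep G m}) := Nat.sInf_mem hnon
    exact key (hasBoxRep_mono G hle hmem)
  · rintro ⟨f, hle, hco, hcov⟩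
    have hco' : ∀ i, ∃ lo hi : Option (Fin (2*k) × Fin 2) → Fin 1 → ℝ,
        ∀ u v, u ≠ v →
          ((f i)ᶜ.Adj u v ↔ ∀ j, max (lo u j) (lo v j) ≤ min (hi u j) (hi v j)) := hco
    choose lof hif hPf using hco'
    apply key
    refine ⟨fun v i => lof i v 0, fun v i => hif i v 0, ?_⟩
    intro u v huv
    constructor
    · intro hadj i
      have hnf : ¬ (f i).Adj u v := fun hfa => ((compl_adj _ _ _).mp (hle i hfa)).2 hadj
      have hca : (f i)ᶜ.Adj u v := (compl_adj _ _ _).mpr ⟨huv, hnf⟩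
      exact (hPf i u v huv).mp hca 0
    · intro h
      by_contra hnadj
      have hGc : Gᶜ.Adj u v := (compl_adj _ _ _).mpr ⟨huv, hnadj⟩
      obtain ⟨i, hfi⟩ := hcov u v hGc
      have hnc : ¬ (f i)ᶜ.Adj u v := fun hc => ((compl_adj _ _ _).mp hc).2 hfi
      have hnot := (hPf i u v huv).not.mp hnc
      push_neg at hnot
      obtain ⟨j, hj⟩ := hnot
      have hj0 : j = 0 := Subsingleton.elim _ _
      rw [hj0] at hj
      exact absurd (h i) (not_le.mpr hj)
end
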